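/- arXiv:math/0409511 — 3 statements merged into one kernel-verified Lean document; each statement's English description precedes it below -/
import Mathlib

section
/- If P(a) = Σ_{r=1}^N t_r a t_r* = Σ_{s=1}^M s_s a s_s* are two Kraus decompositions of the same completely positive map P on M_n(ℂ), then the complex linear span of {t_1, ..., t_N} equals the complex linear span of {s_1, ..., s_M}. In particular the dimension of this span, called the index d(P), depends only on P. -/
open Matrix ComplexConjugate

noncomputable def matVec (n : ℕ) :
    Matrix (Fin n) (Fin n) ℂ ≃ₗ[ℂ] EuclideanSpace ℂ (Fin n × Fin n) :=
  (LinearEquiv.curry ℂ ℂ (Fin n) (Fin n)).symm.trans (WithLp.linearEquiv 2 ℂ _).symm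

lemma matVec_inner {n : ℕ} (a : Matrix (Fin n) (Fin n) ℂ) (x : EuclideanSpace ℂ (Fin n × Fin n)) :
    inner ℂ (matVec n a) x = ∑ p : Fin n × Fin n, conj (a p.1 p.2) * x p := by
  simp [PiLp.inner_apply, matVec]; exact Finset.sum_congr rfl fun p _ => mul_comm _ _

lemma key {n N : ℕ} (t : Fin N → Matrix (Fin n) (Fin n) ℂ)
    (x : EuclideanSpace ℂ (Fin n × Fin n)) :
    ∑ r, inner ℂ (matVec n (t r)) x * conj (inner ℂ (matVec n (t r)) x : ℂ) =
      ∑ p : Fin n × Fin n, ∑ q : Fin n × Fin n, conj (x p) * x q *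
        ((∑ r, t r * single p.2 q.2 1 * (t r)ᴴ : Matrix (Fin n) (Fin n) ℂ)) p.1 q.1 := by
  simp only [matVec_inner, map_sum, Matrix.sum_apply, Matrix.mul_apply,
    single, conjTranspose_apply, of_apply, _root_.map_mul, RingHom.id_apply,
    Finset.sum_mul, Finset.mul_sum, ite_mul, mul_ite, one_mul, zero_mul, mul_zero,
    mul_one, Finset.sum_ite_eq, Finset.sum_ite_eq', Finset.mem_univ, if_true,
    RingHomCompTriple.comp_apply, starRingEnd_apply, star_zero, star_one]
  rw [Finset.sum_comm]
  refine Finset.sum_congr rfl fun p _ => ?_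
  rw [Finset.sum_comm]
  refine Finset.sum_congr rfl fun q _ => ?_
  simp only [ite_and, Finset.sum_ite_eq, Finset.mem_univ, if_true, star_star]
  exact Finset.sum_congr rfl fun r _ => by ring

lemma sum_mul_conj_eq_zero {N : ℕ} (c : Fin N → ℂ) :
    ∑ r, c r * conj (c r) = 0 ↔ ∀ r, c r = 0 := by
  simp_rw [Complex.mul_conj]
  rw [← Complex.ofReal_sum, Complex.ofReal_eq_zero]
  rw [Finset.sum_eq_zero_iff_of_nonneg fun r _ => Complex.normSq_nonneg (c r)]
  simp [Complex.normSq_eq_zero]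

lemma mem_orth_span_range {N : ℕ} {E : Type*} [NormedAddCommGroup E] [InnerProductSpace ℂ E]
    (u : Fin N → E) (x : E) :
    x ∈ (Submodule.span ℂ (Set.range u))ᗮ ↔ ∀ r, (inner ℂ (u r) x : ℂ) = 0 := by
  constructor
  · intro h r
    exact (Submodule.mem_orthogonal _ _).1 h _ (Submodule.subset_span (Set.mem_range_self r))
  · intro h
    rw [Submodule.mem_orthogonal]
    intro y hy
    induction hy using Submodule.span_induction with
    | mem y hy => obtain ⟨r, rfl⟩ := hy; exact h r
    | zero => simp
    | add a b _ _ ha hb => rw [inner_add_left, ha, hb, add_zero]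
    | smul c a _ ha => rw [inner_smul_left, ha, mul_zero]

/-- Two Kraus decompositions of the same completely positive map on `M_n(ℂ)`
have the same complex linear span; in particular the index `d(P)` is
well defined. -/
theorem stmt_1 {n N M : ℕ}
    (P : Matrix (Fin n) (Fin n) ℂ →ₗ[ℂ] Matrix (Fin n) (Fin n) ℂ)
    (t : Fin N → Matrix (Fin n) (Fin n) ℂ)
    (s : Fin M → Matrix (Fin n) (Fin n) ℂ)
    (ht : ∀ a : Matrix (Fin n) (Fin n) ℂ, P a = ∑ r, t r * a * (t r)ᴴ)
    (hs : ∀ a : Matrix (Fin n) (Fin n) ℂ, P a = ∑ r, s r * a * (s r)ᴴ) :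
    Submodule.span ℂ (Set.range t) = Submodule.span ℂ (Set.range s) := by
  set e := matVec n
  have hspan : Submodule.span ℂ (Set.range (e ∘ t)) = Submodule.span ℂ (Set.range (e ∘ s)) := by
    have horth : (Submodule.span ℂ (Set.range (e ∘ t)))ᗮ
        = (Submodule.span ℂ (Set.range (e ∘ s)))ᗮ := by
      ext x
      rw [mem_orth_span_range, mem_orth_span_range]
      simp only [Function.comp_apply]
      rw [← sum_mul_conj_eq_zero (fun r => inner ℂ (e (t r)) x),
        ← sum_mul_conj_eq_zero (fun m => inner ℂ (e (s m)) x)]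
      have : ∑ r, (inner ℂ (e (t r)) x : ℂ) * conj (inner ℂ (e (t r)) x : ℂ)
          = ∑ m, (inner ℂ (e (s m)) x : ℂ) * conj (inner ℂ (e (s m)) x : ℂ) := by
        rw [key t x, key s x]
        refine Finset.sum_congr rfl fun p _ => Finset.sum_congr rfl fun q _ => ?_
        rw [← ht (single p.2 q.2 1), hs (single p.2 q.2 1)]
      rw [this]
    calc Submodule.span ℂ (Set.range (e ∘ t))
        = (Submodule.span ℂ (Set.range (e ∘ t)))ᗮᗮ := (Submodule.orthogonal_orthogonal _).symm
      _ = (Submodule.span ℂ (Set.range (e ∘ s)))ᗮᗮ := by rw [horth]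
      _ = Submodule.span ℂ (Set.range (e ∘ s)) := Submodule.orthogonal_orthogonal _
  apply Submodule.map_injective_of_injective e.injective
  rw [Submodule.map_span, Submodule.map_span, ← Set.range_comp, ← Set.range_comp]
  exact hspan
end

section
/- Let P be a completely positive map on M_n(ℂ) with Kraus decomposition P(a) = Σ_{r=1}^N t_r a t_r*. Define a sesquilinear form on ℂ^{n×n} (functions from pairs (i,j) to ℂ, identified with formal spans of symbols ε_{ij}) by ⟨ε_{ij}, ε_{kl}⟩ = (P(E_{ik}))_{jl}. Then this form is positive semidefinite, and the Hilbert space obtained by quotienting out the null space has complex dimension equal to dim span{t_1,...,t_N}. -/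
open Matrix ComplexOrder

/-- Flattening a matrix (with index swap) as a linear equivalence. -/
noncomputable def flatAux (n : ℕ) : Matrix (Fin n) (Fin n) ℂ ≃ₗ[ℂ] (Fin n × Fin n → ℂ) where
  toFun M p := M p.2 p.1
  map_add' _ _ := rfl
  map_smul' _ _ := rfl
  invFun f := Matrix.of fun i j => f (j, i)
  left_inv _ := rfl
  right_inv _ := rfl

/-- For a completely positive map with Kraus decomposition
`P(a) = Σ_r t_r a t_r*`, the Gram matrix of the sesquilinear form
`⟨ε_{ij}, ε_{kl}⟩ = (P(E_{ik}))_{jl}` on `ℂ^{n×n}` is positive semidefinite,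
and the Hilbert space obtained by quotienting out the null space (whose
dimension is the rank of the Gram matrix) has dimension `dim span{t_r}`. -/
theorem stmt_6 {n N : ℕ}
    (P : Matrix (Fin n) (Fin n) ℂ →ₗ[ℂ] Matrix (Fin n) (Fin n) ℂ)
    (t : Fin N → Matrix (Fin n) (Fin n) ℂ)
    (ht : ∀ a : Matrix (Fin n) (Fin n) ℂ, P a = ∑ r, t r * a * (t r)ᴴ) :
    (Matrix.of fun p q : Fin n × Fin n =>
        P (Matrix.single p.1 q.1 (1 : ℂ)) p.2 q.2).PosSemidef ∧
    (Matrix.of fun p q : Fin n × Fin n =>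
        P (Matrix.single p.1 q.1 (1 : ℂ)) p.2 q.2).rank =
      Module.finrank ℂ (Submodule.span ℂ (Set.range t)) := by
  set A : Matrix (Fin n × Fin n) (Fin N) ℂ := Matrix.of fun p r => t r p.2 p.1 with hA
  have hG : (Matrix.of fun p q : Fin n × Fin n =>
      P (Matrix.single p.1 q.1 (1 : ℂ)) p.2 q.2) = A * Aᴴ := by
    ext p q
    rw [Matrix.of_apply, ht, Matrix.sum_apply, Matrix.mul_apply]
    refine Finset.sum_congr rfl fun r _ => ?_
    simp only [hA, Matrix.of_apply, Matrix.mul_apply, Matrix.single,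
      Matrix.conjTranspose_apply, Finset.sum_mul, Finset.mul_sum, ite_mul,
      mul_ite, zero_mul, mul_zero]
    rw [Finset.sum_eq_single q.1, Finset.sum_eq_single p.1] <;>
      simp +contextual [eq_comm, RingHom.id_apply]
  rw [hG]
  refine ⟨Matrix.posSemidef_self_mul_conjTranspose A, ?_⟩
  rw [Matrix.rank_self_mul_conjTranspose, Matrix.rank_eq_finrank_span_cols]
  have hcols : Set.range A.col = (flatAux n) '' Set.range t := by
    ext f
    constructor
    · rintro ⟨r, rfl⟩; exact ⟨t r, ⟨r, rfl⟩, rfl⟩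
    · rintro ⟨M, ⟨r, rfl⟩, rfl⟩; exact ⟨r, rfl⟩
  rw [hcols, show ⇑(flatAux n) = ⇑(flatAux n).toLinearMap from rfl, ← Submodule.map_span]
  exact LinearEquiv.finrank_map_eq (flatAux n) _
end

section
/- Let P be a completely positive map on M_n(ℂ). Then the Choi matrix of P is positive semidefinite, and conversely if the Choi matrix Σ_{i,k} E_{ik} ⊗ P(E_{ik}) is positive semidefinite then P admits a Kraus decomposition P(a) = Σ_r t_r a t_r* with at most n² matrices t_r. -/
open Matrix ComplexOrder

/-- A linear map `P` on `M_n(ℂ)` is completely positive if for every `k` the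
induced map `P ⊗ id` on `M_n(ℂ) ⊗ M_k(ℂ)` preserves positive semidefiniteness. -/
def IsCompletelyPositive {n : ℕ}
    (P : Matrix (Fin n) (Fin n) ℂ →ₗ[ℂ] Matrix (Fin n) (Fin n) ℂ) : Prop :=
  ∀ (k : ℕ) (M : Matrix (Fin n × Fin k) (Fin n × Fin k) ℂ), M.PosSemidef →
    (Matrix.of fun a b : Fin n × Fin k =>
      P (Matrix.of fun i j : Fin n => M (i, a.2) (j, b.2)) a.1 b.1).PosSemidef

/-- The Choi matrix of a map `P : M_n(ℂ) → M_n(ℂ)`. -/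
def choiMatrix {n : ℕ} (P : Matrix (Fin n) (Fin n) ℂ → Matrix (Fin n) (Fin n) ℂ) :
    Matrix (Fin n × Fin n) (Fin n × Fin n) ℂ :=
  Matrix.of fun p q => P (Matrix.single p.1 q.1 (1 : ℂ)) p.2 q.2

/-- Choi's theorem: if `P` is completely positive then its Choi matrix is
positive semidefinite; conversely, if the Choi matrix is positive semidefinite
then `P` admits a Kraus decomposition with at most `n²` Kraus operators. -/
theorem stmt_11 {n : ℕ}
    (P : Matrix (Fin n) (Fin n) ℂ →ₗ[ℂ] Matrix (Fin n) (Fin n) ℂ) :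
    (IsCompletelyPositive P → (choiMatrix fun a => P a).PosSemidef) ∧
    ((choiMatrix fun a => P a).PosSemidef →
      ∃ t : Fin (n ^ 2) → Matrix (Fin n) (Fin n) ℂ,
        ∀ a : Matrix (Fin n) (Fin n) ℂ, P a = ∑ r, t r * a * (t r)ᴴ) := by
  constructor
  · intro hP
    set A : Matrix (Fin 1) (Fin n × Fin n) ℂ :=
      Matrix.of fun _ p => if p.1 = p.2 then 1 else 0 with hA
    have hM : (Aᴴ * A).PosSemidef := posSemidef_conjTranspose_mul_self A
    have h := hP n (Aᴴ * A) hM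
    have key : (choiMatrix fun a => P a) =
        (Matrix.of fun a b : Fin n × Fin n =>
          P (Matrix.of fun i j : Fin n => (Aᴴ * A) (i, a.2) (j, b.2)) a.1 b.1).submatrix
          Prod.swap Prod.swap := by
      ext p q
      have hinner : (Matrix.of fun i j : Fin n => (Aᴴ * A) (i, p.1) (j, q.1)) =
          Matrix.single p.1 q.1 (1 : ℂ) := by
        ext i j
        simp [hA, Matrix.mul_apply, Matrix.conjTranspose_apply, Matrix.single,
          eq_comm, ite_and]
        split_ifs <;> rfl
      simp [choiMatrix, Matrix.submatrix_apply, hinner]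
    rw [key]
    exact h.submatrix _
  · intro hc
    obtain ⟨B, hB⟩ : ∃ B : Matrix (Fin n × Fin n) (Fin n × Fin n) ℂ,
        (choiMatrix fun a => P a) = Bᴴ * B := by
      open scoped MatrixOrder in
      obtain ⟨X, hX, -, hXX⟩ :=
        CFC.exists_sqrt_of_isSelfAdjoint_of_quasispectrumRestricts hc.isHermitian
          (QuasispectrumRestricts.nnreal_of_nonneg hc.nonneg)
      exact ⟨X, by rw [← hXX, ← Matrix.star_eq_conjTranspose, hX.star_eq]⟩
    set e : Fin (n ^ 2) ≃ Fin n × Fin n :=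
      (finCongr (sq n)).trans (finProdFinEquiv (m := n) (n := n)).symm with he
    set t : Fin (n ^ 2) → Matrix (Fin n) (Fin n) ℂ :=
      fun r => Matrix.of fun a i => star (B (e r) (i, a)) with ht
    refine ⟨t, fun a => ?_⟩
    have key : ∀ i j : Fin n, P (Matrix.single i j (1 : ℂ)) =
        ∑ r : Fin (n ^ 2), t r * Matrix.single i j (1 : ℂ) * (t r)ᴴ := by
      intro i j
      ext p q
      have h1 : (choiMatrix fun a => P a) (i, p) (j, q) =
          P (Matrix.single i j 1) p q := rfl
      rw [← h1, hB, Matrix.mul_apply,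
        ← Equiv.sum_comp e (fun x => Bᴴ (i, p) x * B x (j, q))]
      simp only [Matrix.sum_apply, Matrix.conjTranspose_apply]
      refine Finset.sum_congr rfl fun r _ => ?_
      simp only [ht, Matrix.mul_apply, Matrix.single, Matrix.of_apply,
        Matrix.conjTranspose_apply, star_star, ite_and]
      simp [Finset.sum_ite_eq, mul_comm]
    have expand : ∀ r : Fin (n ^ 2), t r * a * (t r)ᴴ =
        ∑ i, ∑ j, a i j • (t r * Matrix.single i j (1 : ℂ) * (t r)ᴴ) := by
      intro r
      conv_lhs => rw [Matrix.matrix_eq_sum_single a]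
      simp only [Finset.mul_sum, Finset.sum_mul]
      refine Finset.sum_congr rfl fun i _ => Finset.sum_congr rfl fun j _ => ?_
      have : Matrix.single i j (a i j) = a i j • Matrix.single i j (1 : ℂ) := by
        rw [Matrix.smul_single, smul_eq_mul, mul_one]
      rw [this, Matrix.mul_smul, Matrix.smul_mul]
    calc P a = P (∑ i, ∑ j, Matrix.single i j (a i j)) := by
          rw [← Matrix.matrix_eq_sum_single a]
      _ = ∑ i, ∑ j, a i j • P (Matrix.single i j 1) := by
          rw [map_sum]
          refine Finset.sum_congr rfl fun i _ => ?_
          rw [map_sum]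
          refine Finset.sum_congr rfl fun j _ => ?_
          rw [show Matrix.single i j (a i j) =
            a i j • Matrix.single i j (1 : ℂ) by
              rw [Matrix.smul_single, smul_eq_mul, mul_one], _root_.map_smul]
      _ = ∑ i, ∑ j, ∑ r, a i j • (t r * Matrix.single i j (1 : ℂ) * (t r)ᴴ) := by
          simp only [key, Finset.smul_sum]
      _ = ∑ r, ∑ i, ∑ j, a i j • (t r * Matrix.single i j (1 : ℂ) * (t r)ᴴ) := by
          rw [show (∑ i, ∑ j, ∑ r, a i j • (t r * Matrix.single i j (1 : ℂ) * (t r)ᴴ))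
              = ∑ i, ∑ r, ∑ j, a i j • (t r * Matrix.single i j (1 : ℂ) * (t r)ᴴ) from
            Finset.sum_congr rfl fun i _ => Finset.sum_comm, Finset.sum_comm]
      _ = ∑ r, t r * a * (t r)ᴴ := by
          refine Finset.sum_congr rfl fun r _ => (expand r).symm
end
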